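/- Identify S³ with the unit sphere in ℂ² and let g = {(z,w) ∈ S³ : z ∈ ℝ, w ∈ ℝ} be the real great circle. For coprime p, q and φ = φ_{p/q}(z,w) = (e^{2πi/q} z, e^{2πip/q} w), any two circles in the orbit {φᵏ(g) : k ∈ ℤ} are either equal or disjoint. -/

import Mathlib

open Real

noncomputable section

abbrev EC := EuclideanSpace ℂ (Fin 2)

def S3c : Set EC := Metric.sphere 0 1

def mk2 (a b : ℂ) : EC := (WithLp.equiv 2 (Fin 2 → ℂ)).symm ![a, b]

def phi (p q : ℤ) (v : EC) : EC :=
  mk2 (Complex.exp (2 * (π : ℂ) * Complex.I / (q : ℂ)) * v 0)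
      (Complex.exp (2 * (π : ℂ) * Complex.I * (p : ℂ) / (q : ℂ)) * v 1)

/-- The real great circle `g = {(z,w) ∈ S³ : z, w ∈ ℝ}`. -/
def gReal : Set EC := {v ∈ S3c | (v 0).im = 0 ∧ (v 1).im = 0}

@[simp] lemma mk2_zero (a b : ℂ) : mk2 a b 0 = a := rfl
@[simp] lemma mk2_one (a b : ℂ) : mk2 a b 1 = b := rfl

lemma mk2_eta (v : EC) : mk2 (v 0) (v 1) = v := by
  ext i; fin_cases i <;> rfl

lemma norm_mk2 (a b : ℂ) :
    ‖mk2 a b‖ = Real.sqrt (‖a‖ ^ 2 + ‖b‖ ^ 2) := by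
  rw [EuclideanSpace.norm_eq]; simp [mk2, Fin.sum_univ_two]

lemma mem_gReal_iff (v : EC) :
    v ∈ gReal ↔ ‖v‖ = 1 ∧ (v 0).im = 0 ∧ (v 1).im = 0 := by
  simp [gReal, S3c, mem_sphere_zero_iff_norm]

lemma phi_iter (p q : ℤ) (n : ℕ) (v : EC) :
    (phi p q)^[n] v =
      mk2 (Complex.exp (2 * (π : ℂ) * Complex.I / (q : ℂ)) ^ n * v 0)
          (Complex.exp (2 * (π : ℂ) * Complex.I * (p : ℂ) / (q : ℂ)) ^ n * v 1) := by
  induction n with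
  | zero => simp [mk2_eta v]
  | succ n ih =>
      rw [Function.iterate_succ_apply', ih]
      simp only [phi, mk2_zero, mk2_one, pow_succ]
      congr 1 <;> ring

lemma exp1_pow (q : ℤ) (hq : (q : ℂ) ≠ 0) (m : ℕ) :
    Complex.exp (2 * (π : ℂ) * Complex.I / (q : ℂ)) ^ m
      = Complex.exp (((2 * π * m / q : ℝ) : ℂ) * Complex.I) := by
  rw [← Complex.exp_nat_mul]; congr 1; push_cast; field_simp

lemma exp2_pow (p q : ℤ) (hq : (q : ℂ) ≠ 0) (m : ℕ) :
    Complex.exp (2 * (π : ℂ) * Complex.I * (p : ℂ) / (q : ℂ)) ^ m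
      = Complex.exp (((2 * π * p * m / q : ℝ) : ℂ) * Complex.I) := by
  rw [← Complex.exp_nat_mul]; congr 1; push_cast; field_simp

lemma dvd_of_sin (q a : ℤ) (hq : q ≠ 0) (h : Real.sin (2 * π * a / q) = 0) :
    q ∣ 2 * a := by
  rw [Real.sin_eq_zero_iff] at h
  obtain ⟨n, hn⟩ := h
  have hπ : (π : ℝ) ≠ 0 := Real.pi_ne_zero
  have hq' : (q : ℝ) ≠ 0 := Int.cast_ne_zero.mpr hq
  have h2 : (2 * a : ℝ) = n * q := by
    have : (n : ℝ) * π * q = 2 * π * a := by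
      field_simp at hn; linear_combination π * hn
    have := mul_left_cancel₀ hπ (show π * ((n : ℝ) * q) = π * (2 * a) by ring_nf; ring_nf at this; linarith)
    linarith
  have h3 : (2 * a : ℤ) = n * q := by exact_mod_cast h2
  exact ⟨n, by linarith⟩

lemma exp_sq_one (q a : ℤ) (hq : q ≠ 0) (h : q ∣ 2 * a) :
    Complex.exp (((2 * π * a / q : ℝ) : ℂ) * Complex.I) ^ 2 = 1 := by
  obtain ⟨n, hn⟩ := h
  have hq' : (q : ℝ) ≠ 0 := Int.cast_ne_zero.mpr hq
  have hr : (2 * π * a / q : ℝ) + (2 * π * a / q : ℝ) = n * (2 * π) := by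
    have hnr : (2 * a : ℝ) = q * n := by exact_mod_cast hn
    field_simp
    linear_combination hnr
  rw [sq, ← Complex.exp_add]
  have : ((2 * π * a / q : ℝ) : ℂ) * Complex.I + ((2 * π * a / q : ℝ) : ℂ) * Complex.I
      = (n : ℂ) * (2 * π * Complex.I) := by
    rw [← add_mul, ← Complex.ofReal_add, hr]; push_cast; ring
  rw [this]
  exact Complex.exp_int_mul_two_pi_mul_I n

lemma phi_injective (p q : ℤ) : Function.Injective (phi p q) := by
  intro v w h
  have h0 := congrArg (fun x : EC => x 0) h
  have h1 := congrArg (fun x : EC => x 1) h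
  simp only [phi, mk2_zero, mk2_one] at h0 h1
  have e0 := mul_left_cancel₀ (Complex.exp_ne_zero _) h0
  have e1 := mul_left_cancel₀ (Complex.exp_ne_zero _) h1
  ext i; fin_cases i <;> assumption

lemma gReal_map (c d : ℂ) (hc : ‖c‖ = 1) (hd : ‖d‖ = 1)
    (hci : c.im = 0) (hdi : d.im = 0) (v : EC) (hv : v ∈ gReal) :
    mk2 (c * v 0) (d * v 1) ∈ gReal := by
  rw [mem_gReal_iff] at hv ⊢
  obtain ⟨hn, h0, h1⟩ := hv
  refine ⟨?_, ?_, ?_⟩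
  · rw [norm_mk2]
    rw [← mk2_eta v, norm_mk2] at hn
    simpa [map_mul, hc, hd] using hn
  · simp [Complex.mul_im, hci, h0]
  · simp [Complex.mul_im, hdi, h1]

lemma key_step (p q : ℤ) (hq : 1 ≤ q) (hpq : Int.gcd p q = 1) (m : ℕ) :
    (phi p q)^[m] '' gReal = gReal ∨ Disjoint gReal ((phi p q)^[m] '' gReal) := by
  have hq0 : q ≠ 0 := by omega
  have hqC : (q : ℂ) ≠ 0 := Int.cast_ne_zero.mpr hq0
  set c : ℂ := Complex.exp (((2 * π * m / q : ℝ) : ℂ) * Complex.I) with hcdef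
  set d : ℂ := Complex.exp (((2 * π * p * m / q : ℝ) : ℂ) * Complex.I) with hddef
  have hiter : ∀ v : EC, (phi p q)^[m] v = mk2 (c * v 0) (d * v 1) := by
    intro v
    rw [phi_iter, exp1_pow q hqC, exp2_pow p q hqC]
  have habsc : ‖c‖ = 1 := Complex.norm_exp_ofReal_mul_I _
  have habsd : ‖d‖ = 1 := Complex.norm_exp_ofReal_mul_I _
  have hcim : c.im = Real.sin (2 * π * m / q) := Complex.exp_ofReal_mul_I_im _
  have hdim : d.im = Real.sin (2 * π * p * m / q) := Complex.exp_ofReal_mul_I_im _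
  by_cases hdvd : q ∣ 2 * (m : ℤ)
  · -- equal
    left
    have hc2 : c ^ 2 = 1 := by
      have := exp_sq_one q m hq0 (by exact_mod_cast hdvd)
      simpa [hcdef] using this
    have hd2 : d ^ 2 = 1 := by
      have hdvd' : q ∣ 2 * (p * m) := by
        obtain ⟨n, hn⟩ := hdvd
        exact ⟨p * n, by linear_combination p * hn⟩
      have := exp_sq_one q (p * m) hq0 hdvd'
      simpa [hddef, mul_assoc] using this
    have hc1 : c = 1 ∨ c = -1 := by
      rw [sq] at hc2; exact mul_self_eq_one_iff.mp hc2
    have hd1 : d = 1 ∨ d = -1 := by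
      rw [sq] at hd2; exact mul_self_eq_one_iff.mp hd2
    have hcim0 : c.im = 0 := by rcases hc1 with h | h <;> simp [h]
    have hdim0 : d.im = 0 := by rcases hd1 with h | h <;> simp [h]
    apply Set.eq_of_subset_of_subset
    · rintro v ⟨w, hw, rfl⟩
      rw [hiter w]
      exact gReal_map c d habsc habsd hcim0 hdim0 w hw
    · intro v hv
      refine ⟨mk2 (c * v 0) (d * v 1), gReal_map c d habsc habsd hcim0 hdim0 v hv, ?_⟩
      rw [hiter]
      simp only [mk2_zero, mk2_one, ← mul_assoc, ← sq, hc2, hd2, one_mul]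
      exact mk2_eta v
  · -- disjoint
    right
    rw [Set.disjoint_left]
    rintro v hv ⟨w, hw, rfl⟩
    rw [mem_gReal_iff] at hw
    obtain ⟨hwn, hw0, hw1⟩ := hw
    rw [hiter w, mem_gReal_iff] at hv
    obtain ⟨-, hv0, hv1⟩ := hv
    simp only [mk2_zero, mk2_one] at hv0 hv1
    have hne : w 0 ≠ 0 ∨ w 1 ≠ 0 := by
      by_contra h
      push_neg at h
      rw [← mk2_eta w, norm_mk2, h.1, h.2] at hwn
      simp at hwn
    rcases hne with h | h
    · have hre : (w 0).re ≠ 0 := by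
        intro h0
        exact h (Complex.ext h0 hw0)
      have : c.im * (w 0).re = 0 := by
        have := hv0
        rw [Complex.mul_im, hw0] at this
        simpa using this
      have hcim0 : c.im = 0 := by
        rcases mul_eq_zero.mp this with h' | h'
        · exact h'
        · exact absurd h' hre
      rw [hcim] at hcim0
      exact hdvd (dvd_of_sin q m hq0 (by push_cast; exact hcim0))
    · have hre : (w 1).re ≠ 0 := by
        intro h0
        exact h (Complex.ext h0 hw1)
      have : d.im * (w 1).re = 0 := by
        have := hv1
        rw [Complex.mul_im, hw1] at this
        simpa using this
      have hdim0 : d.im = 0 := by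
        rcases mul_eq_zero.mp this with h' | h'
        · exact h'
        · exact absurd h' hre
      rw [hdim] at hdim0
      have hdvd' : q ∣ 2 * (p * m) := by
        have := dvd_of_sin q (p * m) hq0 (by push_cast; rw [← hdim0]; ring_nf)
        exact this
      have hcop : IsCoprime (q : ℤ) p := by
        rw [Int.isCoprime_iff_gcd_eq_one, Int.gcd_comm]; exact hpq
      have : q ∣ p * (2 * m) := by
        have h2 : (2 : ℤ) * (p * m) = p * (2 * m) := by ring
        rwa [h2] at hdvd'
      exact hdvd (hcop.dvd_of_dvd_mul_left this)

lemma main_aux (p q : ℤ) (hq : 1 ≤ q) (hpq : Int.gcd p q = 1) (j k : ℕ) (hjk : j ≤ k) :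
    (phi p q)^[j] '' gReal = (phi p q)^[k] '' gReal ∨
      Disjoint ((phi p q)^[j] '' gReal) ((phi p q)^[k] '' gReal) := by
  obtain ⟨m, rfl⟩ := Nat.exists_eq_add_of_le hjk
  have hcomp : (phi p q)^[j + m] '' gReal = (phi p q)^[j] '' ((phi p q)^[m] '' gReal) := by
    rw [Function.iterate_add, Set.image_comp]
  have hinj : Function.Injective ((phi p q)^[j]) := (phi_injective p q).iterate j
  rcases key_step p q hq hpq m with h | h
  · left; rw [hcomp, h]
  · right
    rw [hcomp]
    exact (Set.disjoint_image_iff hinj).mpr h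

/-- Any two circles in the orbit `{φᵏ(g)}` of the real great circle under
`φ_{p/q}` are either equal or disjoint. -/
theorem phi_orbit_circles_eq_or_disjoint (p q : ℤ) (hq : 1 ≤ q)
    (hpq : Int.gcd p q = 1) (j k : ℕ) :
    (phi p q)^[j] '' gReal = (phi p q)^[k] '' gReal ∨
      Disjoint ((phi p q)^[j] '' gReal) ((phi p q)^[k] '' gReal) := by
  rcases le_total j k with h | h
  · exact main_aux p q hq hpq j k h
  · rcases main_aux p q hq hpq k j h with h' | h'
    · exact Or.inl h'.symm
    · exact Or.inr h'.symm
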